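/- Let F be the formal power series over ℚ whose coefficient of q^n is (n+1)·σ₁(n+1), i.e., F = Σ_{k≥1} k·σ₁(k)·q^{k−1}. Then for every natural number g ≥ 1, the Bryan–Leung count N_{g,8} := g · (coefficient of q^8 in F^{g−1}) satisfies N_{g,8} = (3/35)·g(g−1)(486g⁷ − 7938g⁶ + 69930g⁵ − 389970g⁴ + 1413384g³ − 3216332g² + 4143290g − 2279375). -/

import Mathlib

private lemma sigv0 : ArithmeticFunction.sigma 1 1 = 1 := by decide
private lemma sigv1 : ArithmeticFunction.sigma 1 2 = 3 := by decide
private lemma sigv2 : ArithmeticFunction.sigma 1 3 = 4 := by decide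
private lemma sigv3 : ArithmeticFunction.sigma 1 4 = 7 := by decide
private lemma sigv4 : ArithmeticFunction.sigma 1 5 = 6 := by decide
private lemma sigv5 : ArithmeticFunction.sigma 1 6 = 12 := by decide
private lemma sigv6 : ArithmeticFunction.sigma 1 7 = 8 := by decide
private lemma sigv7 : ArithmeticFunction.sigma 1 8 = 15 := by decide
private lemma sigv8 : ArithmeticFunction.sigma 1 9 = 13 := by decide

/-- The Bryan–Leung power series `F = Σ_{k≥1} k·σ₁(k)·q^{k−1}` over `ℚ`,
whose coefficient of `q^n` is `(n+1)·σ₁(n+1)`. -/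
noncomputable def FBL : PowerSeries ℚ :=
  PowerSeries.mk fun n => (((n + 1) * ArithmeticFunction.sigma 1 (n + 1) : ℕ) : ℚ)

private lemma cF0 : PowerSeries.coeff (R := ℚ) 0 FBL = 1 := by
  simp [FBL]
private lemma cF1 : PowerSeries.coeff (R := ℚ) 1 FBL = 6 := by
  simp [FBL]; norm_num [sigv1]
private lemma cF2 : PowerSeries.coeff (R := ℚ) 2 FBL = 12 := by
  simp [FBL]; norm_num [sigv2]
private lemma cF3 : PowerSeries.coeff (R := ℚ) 3 FBL = 28 := by
  simp [FBL]; norm_num [sigv3]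
private lemma cF4 : PowerSeries.coeff (R := ℚ) 4 FBL = 30 := by
  simp [FBL]; norm_num [sigv4]
private lemma cF5 : PowerSeries.coeff (R := ℚ) 5 FBL = 72 := by
  simp [FBL]; norm_num [sigv5]
private lemma cF6 : PowerSeries.coeff (R := ℚ) 6 FBL = 56 := by
  simp [FBL]; norm_num [sigv6]
private lemma cF7 : PowerSeries.coeff (R := ℚ) 7 FBL = 120 := by
  simp [FBL]; norm_num [sigv7]
private lemma cF8 : PowerSeries.coeff (R := ℚ) 8 FBL = 117 := by
  simp [FBL]; norm_num [sigv8]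

private lemma key : ∀ m : ℕ,
    PowerSeries.coeff (R := ℚ) 0 (FBL ^ m) = 1 ∧
    PowerSeries.coeff (R := ℚ) 1 (FBL ^ m) = 6*(m:ℚ) ∧
    PowerSeries.coeff (R := ℚ) 2 (FBL ^ m) = -6*(m:ℚ) + 18*(m:ℚ)^2 ∧
    PowerSeries.coeff (R := ℚ) 3 (FBL ^ m) = 28*(m:ℚ) - 36*(m:ℚ)^2 + 36*(m:ℚ)^3 ∧
    PowerSeries.coeff (R := ℚ) 4 (FBL ^ m) = -102*(m:ℚ) + 186*(m:ℚ)^2 - 108*(m:ℚ)^3 + 54*(m:ℚ)^4 ∧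
    PowerSeries.coeff (R := ℚ) 5 (FBL ^ m) = (1956/5)*(m:ℚ) - 780*(m:ℚ)^2 + 612*(m:ℚ)^3 - 216*(m:ℚ)^4 + (324/5)*(m:ℚ)^5 ∧
    PowerSeries.coeff (R := ℚ) 6 (FBL ^ m) = -1488*(m:ℚ) + (16756/5)*(m:ℚ)^2 - 2880*(m:ℚ)^3 + 1332*(m:ℚ)^4 - 324*(m:ℚ)^5 + (324/5)*(m:ℚ)^6 ∧
    PowerSeries.coeff (R := ℚ) 7 (FBL ^ m) = (40368/7)*(m:ℚ) - (70656/5)*(m:ℚ)^2 + (67848/5)*(m:ℚ)^3 - 6912*(m:ℚ)^4 + 2160*(m:ℚ)^5 - (1944/5)*(m:ℚ)^6 + (1944/35)*(m:ℚ)^7 ∧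
    PowerSeries.coeff (R := ℚ) 8 (FBL ^ m) = -22845*(m:ℚ) + (2088966/35)*(m:ℚ)^2 - (310956/5)*(m:ℚ)^3 + (176166/5)*(m:ℚ)^4 - 12204*(m:ℚ)^5 + (13932/5)*(m:ℚ)^6 - (1944/5)*(m:ℚ)^7 + (1458/35)*(m:ℚ)^8 := by
  intro m
  induction m with
  | zero => norm_num
  | succ m ih =>
    obtain ⟨h0, h1, h2, h3, h4, h5, h6, h7, h8⟩ := ih
    refine ⟨?_, ?_, ?_, ?_, ?_, ?_, ?_, ?_, ?_⟩ <;>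
    · rw [pow_succ, PowerSeries.coeff_mul, Finset.Nat.sum_antidiagonal_eq_sum_range_succ_mk]
      simp only [Finset.sum_range_succ, Finset.sum_range_zero]
      norm_num [h0, h1, h2, h3, h4, h5, h6, h7, h8, cF0, cF1, cF2, cF3, cF4, cF5, cF6, cF7, cF8]
      try (push_cast; ring)
-- ok

/-- The Bryan–Leung count `N_{g,8} := g · (coefficient of q^8 in F^{g−1})`
is given by the node polynomial of Table (5.1). -/
theorem N_g_8 (g : ℕ) (hg : 1 ≤ g) :
    (g : ℚ) * (PowerSeries.coeff (R := ℚ) 8) (FBL ^ (g - 1)) =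
      (3 / 35 : ℚ) * (g : ℚ) * ((g : ℚ) - 1) * (486 * (g : ℚ) ^ 7 - 7938 * (g : ℚ) ^ 6 + 69930 * (g : ℚ) ^ 5 - 389970 * (g : ℚ) ^ 4 + 1413384 * (g : ℚ) ^ 3 - 3216332 * (g : ℚ) ^ 2 + 4143290 * (g : ℚ) - 2279375) := by
  obtain ⟨m, rfl⟩ := Nat.exists_eq_add_of_le hg
  have h8 := (key m).2.2.2.2.2.2.2.2
  rw [show 1 + m - 1 = m from by omega, h8]
  push_cast
  ring
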